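/- If f : Z → Y and g : Y → X are dominant quasi-compact quasi-separated morphisms of schemes such that both f and g are seminormal morphisms, then the composition g ∘ f : Z → X is a seminormal morphism. -/

import Mathlib

open AlgebraicGeometry CategoryTheory CategoryTheory.Limits

universe u

/-- A morphism of schemes is a universal homeomorphism if every base change of it is a
homeomorphism on underlying topological spaces. -/
def IsUniversalHomeomorphism {X Y : AlgebraicGeometry.Scheme.{u}} (f : X ⟶ Y) : Prop :=
  ∀ (Z : AlgebraicGeometry.Scheme.{u}) (g : Z ⟶ Y), IsHomeomorph (pullback.snd f g).base

/-- A quasi-isomorphism is a universal homeomorphism inducing isomorphisms on all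
residue fields. -/
def IsQuasiIsomorphism {X Y : AlgebraicGeometry.Scheme.{u}} (f : X ⟶ Y) : Prop :=
  IsUniversalHomeomorphism f ∧ ∀ x : X, IsIso (f.residueFieldMap x)

/-- The seminormalization of a dominant morphism `f : Y ⟶ X`: an integral
quasi-isomorphism `sn : Xsn ⟶ X` through which `f` factors, maximal with respect to this
property (any integral quasi-isomorphism `g : Z ⟶ X` factoring `f` receives a unique
morphism from `Xsn` over `X`). -/
structure SeminormalizationData {Y X : AlgebraicGeometry.Scheme.{u}} (f : Y ⟶ X) where
  Xsn : AlgebraicGeometry.Scheme.{u}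
  sn : Xsn ⟶ X
  integral : IsIntegralHom sn
  quasiIso : IsQuasiIsomorphism sn
  factors : ∃ h : Y ⟶ Xsn, h ≫ sn = f
  isMax : ∀ (Z : AlgebraicGeometry.Scheme.{u}) (g : Z ⟶ X), IsIntegralHom g →
    IsQuasiIsomorphism g → (∃ h : Y ⟶ Z, h ≫ g = f) → ∃! u : Xsn ⟶ Z, u ≫ g = sn

/-- A (dominant) morphism `f` is seminormal if its seminormalization `sn_f` is an
isomorphism. -/
def IsSeminormalMorphism {Y X : AlgebraicGeometry.Scheme.{u}} (f : Y ⟶ X) : Prop :=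
  ∃ d : SeminormalizationData f, IsIso d.sn

/-- A bijective morphism in `CommRingCat` is an isomorphism. -/
lemma commRingCat_isIso_of_bijective {A B : CommRingCat.{u}} (φ : A ⟶ B)
    (h : Function.Bijective φ) : IsIso φ :=
  (RingEquiv.ofBijective φ.hom h).toCommRingCatIso.isIso_hom

/-- If the stalk map of `f` at `x` is surjective, then the residue field map at `x` is an
isomorphism. -/
lemma isIso_residueFieldMap_of_stalkMap_surjective {X Y : AlgebraicGeometry.Scheme.{u}}
    (f : X ⟶ Y) (x : X) (h : Function.Surjective (f.stalkMap x)) :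
    IsIso (f.residueFieldMap x) := by
  refine commRingCat_isIso_of_bijective _ ⟨RingHom.injective _, ?_⟩
  intro z
  obtain ⟨u, rfl⟩ := X.residue_surjective x z
  obtain ⟨v, rfl⟩ := h u
  refine ⟨Y.residue (f.base x) v, ?_⟩
  have h2 := AlgebraicGeometry.Scheme.residue_residueFieldMap (f := f) x
  have := congrArg (fun φ => φ v) h2
  simpa using this

/-- Universal homeomorphisms are stable under base change (for the second projection). -/
lemma isUniversalHomeomorphism_snd {W X Y : AlgebraicGeometry.Scheme.{u}}
    (g' : W ⟶ X) (g : Y ⟶ X) (h : IsUniversalHomeomorphism g') :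
    IsUniversalHomeomorphism (pullback.snd g' g) := by
  intro T k
  have h1 := h T (k ≫ g)
  have he : (pullbackLeftPullbackSndIso g' g k).hom ≫ pullback.snd g' (k ≫ g) =
      pullback.snd (pullback.snd g' g) k := pullbackLeftPullbackSndIso_hom_snd g' g k
  rw [← he, AlgebraicGeometry.Scheme.Hom.comp_base, TopCat.coe_comp]
  exact h1.comp
    (AlgebraicGeometry.Scheme.homeoOfIso (asIso (pullbackLeftPullbackSndIso g' g k).hom)).isHomeomorph

/-- Residue field isomorphy is stable under base change for quasi-isomorphisms. -/
lemma isIso_residueFieldMap_snd {W X Y : AlgebraicGeometry.Scheme.{u}}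
    (g' : W ⟶ X) (g : Y ⟶ X) (hres : ∀ w : W, IsIso (g'.residueFieldMap w))
    (t : ↑(pullback g' g)) : IsIso ((pullback.snd g' g).residueFieldMap t) := by
  rw [← AlgebraicGeometry.Scheme.Pullback.SpecTensorTo_SpecOfPoint t]
  set T := AlgebraicGeometry.Scheme.Pullback.Triplet.ofPoint t with hT
  set p := AlgebraicGeometry.Scheme.Pullback.SpecOfPoint t with hp
  -- the left leg of the pushout defining `T.tensor` is an isomorphism
  have hleg : IsIso ((X.residueFieldCongr T.hx).inv ≫ g'.residueFieldMap T.x) := by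
    have := hres T.x; infer_instance
  have hinr : IsIso T.tensorInr := by
    unfold AlgebraicGeometry.Scheme.Pullback.Triplet.tensorInr
    exact pushout_inr_iso_of_left_iso _ _
  have hSpecInr : IsIso (Spec.map T.tensorInr) := inferInstance
  -- the composite residue field map is an isomorphism
  have h2 := AlgebraicGeometry.Scheme.Hom.residueFieldMap_congr
    (AlgebraicGeometry.Scheme.Pullback.Triplet.specTensorTo_snd T) p
  have hiso1 : IsIso ((Y.fromSpecResidueField T.y).residueFieldMap
      ((Spec.map T.tensorInr).base p)) :=
    isIso_residueFieldMap_of_stalkMap_surjective _ _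
      ((Y.fromSpecResidueField T.y).stalkMap_surjective _)
  have hiso2 : IsIso ((Spec.map T.tensorInr).residueFieldMap p) :=
    isIso_residueFieldMap_of_stalkMap_surjective _ _
      ((Spec.map T.tensorInr).stalkMap_surjective _)
  have hAB : IsIso ((pullback.snd g' g).residueFieldMap (T.SpecTensorTo.base p) ≫
      T.SpecTensorTo.residueFieldMap p) := by
    rw [← AlgebraicGeometry.Scheme.residueFieldMap_comp, h2,
      AlgebraicGeometry.Scheme.residueFieldMap_comp]
    exact IsIso.comp_isIso' (Iso.isIso_hom _) (IsIso.comp_isIso' hiso1 hiso2)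
  have hb_inj : Function.Injective (T.SpecTensorTo.residueFieldMap p) := RingHom.injective _
  have ha_inj : Function.Injective
      ((pullback.snd g' g).residueFieldMap (T.SpecTensorTo.base p)) := RingHom.injective _
  have ha_surj : Function.Surjective
      ((pullback.snd g' g).residueFieldMap (T.SpecTensorTo.base p)) := by
    intro z
    have hid := congrArg (fun φ => φ ((T.SpecTensorTo.residueFieldMap p) z))
      (IsIso.inv_hom_id (I := hAB)
        ((pullback.snd g' g).residueFieldMap (T.SpecTensorTo.base p) ≫
          T.SpecTensorTo.residueFieldMap p))
    refine ⟨(inv ((pullback.snd g' g).residueFieldMap (T.SpecTensorTo.base p) ≫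
      T.SpecTensorTo.residueFieldMap p) (I := hAB)) ((T.SpecTensorTo.residueFieldMap p) z),
      hb_inj ?_⟩
    simp only [comp_apply, id_apply] at hid
    exact hid
  exact commRingCat_isIso_of_bijective _ ⟨ha_inj, ha_surj⟩

/-- Quasi-isomorphisms are stable under base change. -/
lemma isQuasiIsomorphism_snd {W X Y : AlgebraicGeometry.Scheme.{u}}
    (g' : W ⟶ X) (g : Y ⟶ X) (h : IsQuasiIsomorphism g') :
    IsQuasiIsomorphism (pullback.snd g' g) :=
  ⟨isUniversalHomeomorphism_snd g' g h.1, isIso_residueFieldMap_snd g' g h.2⟩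

/-- If `f : Z ⟶ Y` and `g : Y ⟶ X` are dominant quasi-compact quasi-separated morphisms
of schemes that are both seminormal, then `g ∘ f` is seminormal. -/
theorem isSeminormalMorphism_comp {Z Y X : AlgebraicGeometry.Scheme.{u}}
    (f : Z ⟶ Y) (g : Y ⟶ X)
    [IsDominant f] [QuasiCompact f] [QuasiSeparated f]
    [IsDominant g] [QuasiCompact g] [QuasiSeparated g]
    (hf : IsSeminormalMorphism f) (hg : IsSeminormalMorphism g) :
    IsSeminormalMorphism (f ≫ g) := by
  obtain ⟨e, he⟩ := hf
  obtain ⟨d, hd⟩ := hg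
  obtain ⟨hY, hhY⟩ := d.factors
  refine ⟨{
    Xsn := d.Xsn
    sn := d.sn
    integral := d.integral
    quasiIso := d.quasiIso
    factors := ⟨f ≫ hY, by rw [Category.assoc, hhY]⟩
    isMax := ?_ }, hd⟩
  rintro W g' hint hqi ⟨h, hh⟩
  -- pull back `g'` along `g`
  have hint' : IsIntegralHom (pullback.snd g' g) :=
    by haveI := hint; infer_instance
  have hqi' : IsQuasiIsomorphism (pullback.snd g' g) := isQuasiIsomorphism_snd g' g hqi
  -- `f` factors through the pullback
  have hfac : ∃ u : Z ⟶ pullback g' g, u ≫ pullback.snd g' g = f :=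
    ⟨pullback.lift h f hh, pullback.lift_snd _ _ _⟩
  obtain ⟨u, hu, -⟩ := e.isMax (pullback g' g) (pullback.snd g' g) hint' hqi' hfac
  -- the resulting lift `Y ⟶ W` of `g` through `g'`
  have := he
  have hlift : (inv e.sn ≫ u ≫ pullback.fst g' g) ≫ g' = g := by
    rw [Category.assoc, Category.assoc, pullback.condition, ← Category.assoc u,
      hu, IsIso.inv_hom_id_assoc]
  exact d.isMax W g' hint hqi ⟨inv e.sn ≫ u ≫ pullback.fst g' g, hlift⟩
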